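/- Let k be an odd integer with k ≥ 3, and let X, Y, Z, W be rational numbers with X^k + Y^k = Z^k + W^k, ZW ≠ 0, W/Z = λ^2 for some nonzero rational λ, and XYZW·(X^k − Y^k)·(X^k − W^k)·(Y^k − W^k) ≠ 0. Then the numbers a = (X^k − W^k)/(λ^k Z^k), b = −λ^k, c = (Y^k − W^k)/(λ^k Z^k), d = λ^{−k} are pairwise distinct and nonzero, and each of ab+1, ac+1, ad+1, bc+1, bd+1, cd+1 is a kth power of a rational number; hence they form a kth power rational Diophantine quadruple. -/

import Mathlib

theorem fermat_euler_odd_quadruple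
    (k : ℕ) (hk : 3 ≤ k) (hodd : Odd k)
    (X Y Z W : ℚ) (hE : X ^ k + Y ^ k = Z ^ k + W ^ k) (hZW : Z * W ≠ 0)
    (lam : ℚ) (hlam : lam ≠ 0) (hsq : W / Z = lam ^ 2)
    (hnd : X * Y * Z * W * (X ^ k - Y ^ k) * (X ^ k - W ^ k) * (Y ^ k - W ^ k) ≠ 0)
    (a b c d : ℚ)
    (ha : a = (X ^ k - W ^ k) / (lam ^ k * Z ^ k))
    (hb : b = -lam ^ k)
    (hc : c = (Y ^ k - W ^ k) / (lam ^ k * Z ^ k))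
    (hd : d = (lam ^ k)⁻¹) :
    (a ≠ b ∧ a ≠ c ∧ a ≠ d ∧ b ≠ c ∧ b ≠ d ∧ c ≠ d) ∧
    (a ≠ 0 ∧ b ≠ 0 ∧ c ≠ 0 ∧ d ≠ 0) ∧
    (∃ q : ℚ, a * b + 1 = q ^ k) ∧
    (∃ q : ℚ, a * c + 1 = q ^ k) ∧
    (∃ q : ℚ, a * d + 1 = q ^ k) ∧
    (∃ q : ℚ, b * c + 1 = q ^ k) ∧
    (∃ q : ℚ, b * d + 1 = q ^ k) ∧
    (∃ q : ℚ, c * d + 1 = q ^ k) := by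
  have hZ : Z ≠ 0 := fun h => hZW (by simp [h])
  have hWne : W ≠ 0 := fun h => hZW (by simp [h])
  rw [div_eq_iff hZ] at hsq
  simp only [mul_ne_zero_iff] at hnd
  obtain ⟨⟨⟨⟨⟨⟨hX, hY⟩, -⟩, -⟩, hXY⟩, hXW⟩, hYW⟩ := hnd
  subst hsq a b c d
  have hlk : lam ^ k ≠ 0 := pow_ne_zero _ hlam
  have hZk : Z ^ k ≠ 0 := pow_ne_zero _ hZ
  have hXk : X ^ k ≠ 0 := pow_ne_zero _ hX
  have hYk : Y ^ k ≠ 0 := pow_ne_zero _ hY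
  have hD : lam ^ k * Z ^ k ≠ 0 := mul_ne_zero hlk hZk
  have hWk : (lam ^ 2 * Z) ^ k = lam ^ k * lam ^ k * Z ^ k := by
    rw [mul_pow, ← pow_mul, two_mul, pow_add]
  refine ⟨⟨?_, ?_, ?_, ?_, ?_, ?_⟩, ⟨div_ne_zero hXW hD, by simpa using hlk,
    div_ne_zero hYW hD, inv_ne_zero hlk⟩, ⟨Y/Z, ?_⟩, ⟨X*Y/((lam^2*Z)*Z), ?_⟩,
    ⟨X/(lam^2*Z), ?_⟩, ⟨X/Z, ?_⟩, ⟨0, ?_⟩, ⟨Y/(lam^2*Z), ?_⟩⟩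
  · intro h; rw [div_eq_iff hD] at h; exact hXk (by linear_combination h + hWk)
  · intro h; rw [div_eq_div_iff hD hD] at h
    exact hXY (by have := mul_right_cancel₀ hD h; linarith)
  · intro h; field_simp at h
    have h2 : X ^ k - (lam ^ 2 * Z) ^ k = Z ^ k := mul_right_cancel₀ hlk (by linear_combination lam ^ k * h)
    exact hYk (by linear_combination hE - h2)
  · intro h; field_simp at h
    exact hYk (by linear_combination -h + hWk)
  · intro h; field_simp at h
    nlinarith [mul_self_nonneg (lam ^ k), h]
  · intro h; field_simp at h
    have h2 : Y ^ k - (lam ^ 2 * Z) ^ k = Z ^ k := mul_right_cancel₀ hlk (by linear_combination lam ^ k * h)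
    exact hXk (by linear_combination hE - h2)
  · rw [div_pow]; field_simp
    linear_combination -hE
  · rw [div_pow]; field_simp
    linear_combination (-(lam ^ k * (lam ^ k * Z ^ k) ^ 3)) * hE - (lam ^ k * (lam ^ k * Z ^ k) ^ 3) * hWk
  · rw [div_pow]; field_simp; ring
  · rw [div_pow]; field_simp
    linear_combination -hE
  · have hk0 : k ≠ 0 := by omega
    rw [zero_pow hk0, neg_mul, mul_inv_cancel₀ hlk]; ring
  · rw [div_pow]; field_simp; ring
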